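/- A nonzero ±1-valued event sequence η on [0,T] satisfies ‖η‖_D = 1 if and only if η has alternating signs. -/

import Mathlib

open Set Function Filter Classical

/-- The next SOD sampling time after time `s` for input `f`, threshold `θ`, on `[0,T]`:
the infimum of `{t ∈ (s,T] : |f t - f s| ≥ θ}` if this set is nonempty, `none` otherwise. -/
noncomputable def sodNext (T θ : ℝ) (f : ℝ → ℝ) (s : ℝ) : Option ℝ :=
  if (∃ t ∈ Set.Ioc s T, θ ≤ |f t - f s|) then
    some (sInf {t | t ∈ Set.Ioc s T ∧ θ ≤ |f t - f s|})
  else none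

/-- The `k`-th SOD sampling time (`t_0 = 0`), `none` if the recursion has stopped before `k`. -/
noncomputable def sodTime (T θ : ℝ) (f : ℝ → ℝ) : ℕ → Option ℝ
  | 0 => some 0
  | n + 1 => (sodTime T θ f n).bind (sodNext T θ f)

/-- The SOD output event sequence `Φ_θ(f)` : it takes the value `f t_k - f t_{k-1}` at
each sampling time `t_k`, `k ≥ 1`, and `0` elsewhere. -/
noncomputable def sodOut (T θ : ℝ) (f : ℝ → ℝ) : ℝ → ℝ := fun t =>
  if h : ∃ k : ℕ, ∃ s : ℝ, sodTime T θ f k = some s ∧ sodNext T θ f s = some t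
  then f t - f h.choose_spec.choose
  else 0

/-- Membership in `F[0,T]`: continuous on `[0,T]` with `f 0 = 0`. -/
def memF (T : ℝ) (f : ℝ → ℝ) : Prop :=
  ContinuousOn f (Set.Icc 0 T) ∧ f 0 = 0

/-- An event sequence on `[0,T]`: finitely supported with support in `[0,T]`. -/
def IsEventSeq (T : ℝ) (η : ℝ → ℝ) : Prop :=
  (Function.support η).Finite ∧ Function.support η ⊆ Set.Icc 0 T

/-- `η` is `±1`-valued on its support. -/
def IsPM (η : ℝ → ℝ) : Prop :=
  ∀ t ∈ Function.support η, η t = 1 ∨ η t = -1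

/-- Weyl's discrepancy norm `‖η‖_D = sup_{0 ≤ a ≤ b ≤ T} |Σ_{t ∈ [a,b]} η t|`. -/
noncomputable def discNorm (T : ℝ) (η : ℝ → ℝ) : ℝ :=
  sSup {x | ∃ a b : ℝ, 0 ≤ a ∧ a ≤ b ∧ b ≤ T ∧ x = |∑ᶠ t ∈ Set.Icc a b, η t|}

/-- Alexiewicz norm `‖η‖_A = sup_{a ∈ [0,T]} |Σ_{t ∈ [0,a]} η t|`. -/
noncomputable def alexNorm (T : ℝ) (η : ℝ → ℝ) : ℝ :=
  sSup {x | ∃ a : ℝ, 0 ≤ a ∧ a ≤ T ∧ x = |∑ᶠ t ∈ Set.Icc 0 a, η t|}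

/-- The values of `η` at consecutive support points alternate in sign. -/
def Alternating (η : ℝ → ℝ) : Prop :=
  ∀ s u : ℝ, s ∈ Function.support η → u ∈ Function.support η → s < u →
    (∀ t ∈ Function.support η, ¬ (s < t ∧ t < u)) → η s * η u < 0

/-- One `(+−)`-transcription step: erase a `+1` followed (with no support in between) by a `−1`. -/
def StepPM (η η' : ℝ → ℝ) : Prop :=
  ∃ s u : ℝ, s < u ∧ η s = 1 ∧ η u = -1 ∧ (∀ t : ℝ, s < t → t < u → η t = 0) ∧
    η' = Function.update (Function.update η s 0) u 0

/-- One `(−+)`-transcription step: erase a `−1` followed (with no support in between) by a `+1`. -/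
def StepMP (η η' : ℝ → ℝ) : Prop :=
  ∃ s u : ℝ, s < u ∧ η s = -1 ∧ η u = 1 ∧ (∀ t : ℝ, s < t → t < u → η t = 0) ∧
    η' = Function.update (Function.update η s 0) u 0

/-- `StepsN R n x y` : `y` is obtained from `x` by `n` successive `R`-steps. -/
def StepsN (R : (ℝ → ℝ) → (ℝ → ℝ) → Prop) : ℕ → (ℝ → ℝ) → (ℝ → ℝ) → Prop
  | 0, x, y => x = y
  | n + 1, x, z => ∃ y, R x y ∧ StepsN R n y z

/-- Uniform distance `‖f − g‖_∞` over `[0,T]`. -/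
noncomputable def unifDist (T : ℝ) (f g : ℝ → ℝ) : ℝ :=
  sSup {x | ∃ t ∈ Set.Icc 0 T, x = |f t - g t|}

/-- a nonzero ±1-valued event sequence has discrepancy norm `1` iff its
values alternate in sign. -/

lemma alt_sum_bound (g : ℝ → ℝ) :
    ∀ n (F : Finset ℝ), F.card ≤ n → (∀ i ∈ F, g i = 1 ∨ g i = -1) →
    (∀ s ∈ F, ∀ u ∈ F, s < u → (∀ t ∈ F, ¬ (s < t ∧ t < u)) → g s = -g u) →
    |∑ i ∈ F, g i| ≤ 1 := by
  intro n
  induction n with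
  | zero =>
    intro F hc _ _
    have : F = ∅ := Finset.card_eq_zero.mp (Nat.le_zero.mp hc)
    simp [this]
  | succ n ih =>
    intro F hc hpm halt
    rcases F.eq_empty_or_nonempty with rfl | hne
    · simp
    set m := F.max' hne with hm
    have hmF : m ∈ F := F.max'_mem hne
    rcases (F.erase m).eq_empty_or_nonempty with he | hne'
    · have : F = {m} := by
        apply Finset.eq_singleton_iff_unique_mem.mpr
        exact ⟨hmF, fun x hx => by
          by_contra hxm
          exact (Finset.eq_empty_iff_forall_notMem.mp he x) (Finset.mem_erase.mpr ⟨hxm, hx⟩)⟩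
      rw [this]
      rcases hpm m hmF with h | h <;> simp [h]
    set m' := (F.erase m).max' hne' with hm'
    have hm'F : m' ∈ F.erase m := (F.erase m).max'_mem hne'
    have hm'F' : m' ∈ F := Finset.mem_of_mem_erase hm'F
    have hm'lt : m' < m :=
      lt_of_le_of_ne (F.le_max' m' hm'F') (Finset.mem_erase.mp hm'F).1
    -- no element of F strictly between m' and m
    have hconsec : ∀ t ∈ F, ¬ (m' < t ∧ t < m) := by
      rintro t ht ⟨h1, h2⟩
      have : t ∈ F.erase m := Finset.mem_erase.mpr ⟨ne_of_lt h2, ht⟩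
      exact absurd ((F.erase m).le_max' t this) (not_le.mpr h1)
    have hopp : g m' = -g m := halt m' hm'F' m hmF hm'lt hconsec
    set F' := (F.erase m).erase m' with hF'
    have hsum : ∑ i ∈ F, g i = ∑ i ∈ F', g i := by
      rw [← Finset.add_sum_erase _ _ hmF, ← Finset.add_sum_erase _ _ hm'F]
      rw [hopp]; ring
    rw [hsum]
    apply ih F'
    · have h1 : F'.card < (F.erase m).card := Finset.card_erase_lt_of_mem hm'F
      have h2 : (F.erase m).card < F.card := Finset.card_erase_lt_of_mem hmF
      omega
    · intro i hi; exact hpm i (Finset.mem_of_mem_erase (Finset.mem_of_mem_erase hi))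
    · intro s hs u hu hsu hbet
      have hsF : s ∈ F := Finset.mem_of_mem_erase (Finset.mem_of_mem_erase hs)
      have huF : u ∈ F := Finset.mem_of_mem_erase (Finset.mem_of_mem_erase hu)
      apply halt s hsF u huF hsu
      rintro t ht ⟨h1, h2⟩
      have hum' : u < m' := by
        have := (F.erase m).le_max' u (Finset.mem_of_mem_erase hu)
        exact lt_of_le_of_ne this (Finset.mem_erase.mp hu).1
      have htF' : t ∈ F' := by
        refine Finset.mem_erase.mpr ⟨?_, Finset.mem_erase.mpr ⟨?_, ht⟩⟩
        · exact ne_of_lt (lt_trans h2 hum')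
        · exact ne_of_lt (lt_trans h2 (lt_trans hum' hm'lt))
      exact hbet t htF' ⟨h1, h2⟩
theorem stmt11 (T : ℝ) (hT : 0 < T) (η : ℝ → ℝ)
    (hη : IsEventSeq T η) (hpm : IsPM η) (hne : η ≠ 0) :
    discNorm T η = 1 ↔ Alternating η := by
  obtain ⟨hfin, hsub⟩ := hη
  -- the defining set of the discrepancy norm
  set S : Set ℝ := {x | ∃ a b : ℝ, 0 ≤ a ∧ a ≤ b ∧ b ≤ T ∧ x = |∑ᶠ t ∈ Set.Icc a b, η t|}
    with hS
  have hdisc : discNorm T η = sSup S := rfl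
  -- generic upper bound : the number of support points
  have hbddN : BddAbove S := by
    refine ⟨(hfin.toFinset.card : ℝ), ?_⟩
    rintro x ⟨a, b, _, _, _, rfl⟩
    have hF : (Set.Icc a b ∩ Function.support η).Finite :=
      hfin.subset Set.inter_subset_right
    rw [finsum_mem_eq_sum η hF]
    calc |∑ i ∈ hF.toFinset, η i| ≤ ∑ i ∈ hF.toFinset, |η i| :=
          Finset.abs_sum_le_sum_abs _ _
      _ ≤ ∑ i ∈ hfin.toFinset, |η i| := by
          apply Finset.sum_le_sum_of_subset_of_nonneg
          · intro i hi
            rw [Set.Finite.mem_toFinset] at hi ⊢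
            exact hi.2
          · intro i _ _; exact abs_nonneg _
      _ ≤ (hfin.toFinset.card : ℝ) := by
          calc ∑ i ∈ hfin.toFinset, |η i| ≤ ∑ _i ∈ hfin.toFinset, (1:ℝ) := ?_
            _ = (hfin.toFinset.card : ℝ) := by simp
          apply Finset.sum_le_sum
          intro i hi
          rw [Set.Finite.mem_toFinset] at hi
          rcases hpm i hi with h | h <;> simp [h]
  constructor
  · -- discNorm = 1 → Alternating
    intro hone
    intro s u hs hu hsu hcons
    by_contra hprod
    push_neg at hprod
    -- same sign at s and u
    have habs : |η s + η u| = 2 := by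
      rcases hpm s hs with h1 | h1 <;> rcases hpm u hu with h2 | h2 <;>
        rw [h1, h2] at hprod ⊢ <;> norm_num at hprod <;> norm_num
    -- the interval sum over [s,u] is ±2
    have hset : Set.Icc s u ∩ Function.support η = {s, u} := by
      ext t
      constructor
      · rintro ⟨⟨h1, h2⟩, ht⟩
        by_contra htne
        rw [Set.mem_insert_iff, Set.mem_singleton_iff] at htne
        push_neg at htne
        exact hcons t ht ⟨lt_of_le_of_ne h1 (Ne.symm htne.1), lt_of_le_of_ne h2 htne.2⟩
      · rintro (rfl | rfl)
        · exact ⟨⟨le_refl _, le_of_lt hsu⟩, hs⟩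
        · exact ⟨⟨le_of_lt hsu, le_refl _⟩, hu⟩
    have hsum : ∑ᶠ t ∈ Set.Icc s u, η t = η s + η u := by
      rw [← finsum_mem_inter_support η (Set.Icc s u), hset,
        finsum_mem_pair (ne_of_lt hsu)]
    have h2S : (2 : ℝ) ∈ S := by
      refine ⟨s, u, (hsub hs).1, le_of_lt hsu, (hsub hu).2, ?_⟩
      rw [hsum, habs]
    have := le_csSup hbddN h2S
    rw [← hdisc, hone] at this
    linarith
  · -- Alternating → discNorm = 1
    intro halt
    have hub : ∀ x ∈ S, x ≤ 1 := by
      rintro x ⟨a, b, ha, hab, hb, rfl⟩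
      have hF : (Set.Icc a b ∩ Function.support η).Finite :=
        hfin.subset Set.inter_subset_right
      rw [finsum_mem_eq_sum η hF]
      apply alt_sum_bound η hF.toFinset.card hF.toFinset le_rfl
      · intro i hi
        rw [Set.Finite.mem_toFinset] at hi
        exact hpm i hi.2
      · intro s hs u hu hsu hbet
        rw [Set.Finite.mem_toFinset] at hs hu
        have hprod : η s * η u < 0 := by
          apply halt s u hs.2 hu.2 hsu
          rintro t ht ⟨h1, h2⟩
          have htF : t ∈ hF.toFinset := by
            rw [Set.Finite.mem_toFinset]
            exact ⟨⟨le_trans hs.1.1 (le_of_lt h1), le_trans (le_of_lt h2) hu.1.2⟩, ht⟩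
          exact hbet t htF ⟨h1, h2⟩
        rcases hpm s hs.2 with h1 | h1 <;> rcases hpm u hu.2 with h2 | h2 <;>
          rw [h1, h2] at hprod ⊢ <;> norm_num at hprod <;> norm_num
    obtain ⟨t0, ht0⟩ := Function.support_nonempty_iff.mpr hne
    have h1S : (1 : ℝ) ∈ S := by
      refine ⟨t0, t0, (hsub ht0).1, le_refl _, (hsub ht0).2, ?_⟩
      rw [Set.Icc_self, finsum_mem_singleton]
      rcases hpm t0 ht0 with h | h <;> simp [h]
    rw [hdisc]
    exact le_antisymm (Real.sSup_le hub zero_le_one) (le_csSup ⟨1, hub⟩ h1S)
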